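/- Let τ3 be the Hopf algebra automorphism of H_8 determined by τ3(x) = y, τ3(y) = x, τ3(z) = (1/2)(z + xz + yz - xyz). Then, as Yetter–Drinfeld modules over H_8: (M⟨b·i, x⟩)^{τ3} ≅ M⟨-b·i, y⟩ for b = ±1; (M⟨(xy,x)⟩)^{τ3} ≅ M⟨(y,xy)⟩; and (W^{b1,-1})^{τ3} ≅ W^{-b1,-1} for b1 = ±1. -/

import Mathlib

open TensorProduct Coalgebra

noncomputable section

/-- The Kac–Paljutkin algebra structure: a Hopf algebra `H` over `K` together with
generators `x, y, z` satisfying the defining relations of `H₈`, such that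
`1, x, y, xy, z, xz, yz, xyz` is a linear basis, with the prescribed
comultiplication, counit and antipode values. -/
structure KPAlg (K : Type*) (H : Type*) [Field K] [Ring H] [HopfAlgebra K H] where
  x : H
  y : H
  z : H
  basis_indep : LinearIndependent K
    ![(1 : H), x, y, x*y, z, x*z, y*z, x*y*z]
  basis_span : Submodule.span K
    (Set.range ![(1 : H), x, y, x*y, z, x*z, y*z, x*y*z]) = ⊤
  x_sq : x^2 = 1
  y_sq : y^2 = 1
  xy_comm : x*y = y*x
  zx : z*x = y*z
  zy : z*y = x*z
  z_sq : z^2 = (2:K)⁻¹ • (1 + x + y - x*y)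
  comul_x : comul (R := K) x = x ⊗ₜ[K] x
  comul_y : comul (R := K) y = y ⊗ₜ[K] y
  comul_z : comul (R := K) z =
    (2:K)⁻¹ • (z ⊗ₜ[K] z + z ⊗ₜ[K] (x*z) + (y*z) ⊗ₜ[K] z - (y*z) ⊗ₜ[K] (x*z))
  counit_x : counit (R := K) x = 1
  counit_y : counit (R := K) y = 1
  counit_z : counit (R := K) z = 1
  antipode_x : HopfAlgebra.antipode (R := K) x = x
  antipode_y : HopfAlgebra.antipode (R := K) y = y
  antipode_z : HopfAlgebra.antipode (R := K) z = z

end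


open TensorProduct Coalgebra

noncomputable section

variable (K : Type*) (H : Type*) [Field K] [Ring H] [HopfAlgebra K H]

/-- The data of a candidate Yetter–Drinfeld module over `H`: a `K`-bilinear
action of `H` and a `K`-linear coaction. -/
structure PreYD (M : Type*) [AddCommGroup M] [Module K M] where
  act : H →ₗ[K] M →ₗ[K] M
  coact : M →ₗ[K] H ⊗[K] M

namespace PreYD

variable {K H}
variable {M : Type*} [AddCommGroup M] [Module K M]
variable {N : Type*} [AddCommGroup N] [Module K N]

/-- The Yetter–Drinfeld compatibility map `h ⊗ m ↦ h₍₁₎ m₍₋₁₎ S(h₍₃₎) ⊗ h₍₂₎ · m₍₀₎`. -/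
def ydRHS (P : PreYD K H M) : H ⊗[K] M →ₗ[K] H ⊗[K] M :=
  let Δ : H →ₗ[K] H ⊗[K] H := comul (R := K)
  let S : H →ₗ[K] H := HopfAlgebra.antipode (R := K)
  let Δ₂ : H →ₗ[K] H ⊗[K] (H ⊗[K] H) :=
    (TensorProduct.map LinearMap.id Δ) ∘ₗ Δ
  -- h₁ ⊗ (h₂ ⊗ h₃) ↦ (h₁ ⊗ h₃) ⊗ h₂
  let e1 : H ⊗[K] (H ⊗[K] H) →ₗ[K] (H ⊗[K] H) ⊗[K] H :=
    (TensorProduct.assoc K H H H).symm.toLinearMap ∘ₗ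
      (TensorProduct.map LinearMap.id (TensorProduct.comm K H H).toLinearMap)
  -- (h₁ ⊗ h₃) ⊗ g ↦ h₁ * g * S h₃
  let mulFinal : (H ⊗[K] H) ⊗[K] H →ₗ[K] H :=
    (LinearMap.mul' K H) ∘ₗ
    (TensorProduct.map LinearMap.id (LinearMap.mul' K H)) ∘ₗ
    (TensorProduct.map LinearMap.id (TensorProduct.comm K H H).toLinearMap) ∘ₗ
    (TensorProduct.assoc K H H H).toLinearMap ∘ₗ
    (TensorProduct.map (TensorProduct.map LinearMap.id S) LinearMap.id)
  (TensorProduct.map mulFinal (TensorProduct.lift P.act)) ∘ₗ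
    (TensorProduct.tensorTensorTensorComm K (H ⊗[K] H) H H M).toLinearMap ∘ₗ
    (TensorProduct.map e1 LinearMap.id) ∘ₗ
    (TensorProduct.map Δ₂ P.coact)

/-- The axioms making a `PreYD` a genuine Yetter–Drinfeld module: `M` is a left
`H`-module, a left `H`-comodule, and the Yetter–Drinfeld compatibility holds. -/
def IsYD (P : PreYD K H M) : Prop :=
  (∀ m : M, P.act 1 m = m) ∧
  (∀ g h : H, ∀ m : M, P.act (g * h) m = P.act g (P.act h m)) ∧
  (∀ m : M, (TensorProduct.assoc K H H M)
      ((TensorProduct.map (comul (R := K)) LinearMap.id) (P.coact m)) =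
    (TensorProduct.map LinearMap.id P.coact) (P.coact m)) ∧
  (∀ m : M, (TensorProduct.lid K M)
      ((TensorProduct.map (counit (R := K)) LinearMap.id) (P.coact m)) = m) ∧
  (∀ (h : H) (m : M), P.coact (P.act h m) = P.ydRHS (h ⊗ₜ[K] m))

/-- Isomorphism of Yetter–Drinfeld module data: a linear equivalence commuting
with the actions and the coactions. -/
def Equiv (P : PreYD K H M) (Q : PreYD K H N) : Prop :=
  ∃ f : M ≃ₗ[K] N,
    (∀ (h : H) (m : M), f (P.act h m) = Q.act h (f m)) ∧
    (∀ m : M, Q.coact (f m) =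
      (TensorProduct.map LinearMap.id (f : M →ₗ[K] N)) (P.coact m))

/-- A `K`-subspace which is both an `H`-submodule and an `H`-subcomodule. -/
def IsSubYD (P : PreYD K H M) (S : Submodule K M) : Prop :=
  (∀ h : H, ∀ m ∈ S, P.act h m ∈ S) ∧
  (∀ m ∈ S, P.coact m ∈
    LinearMap.range (TensorProduct.map (LinearMap.id : H →ₗ[K] H) S.subtype))

/-- A Yetter–Drinfeld module is simple if it is nonzero and has no nonzero
proper Yetter–Drinfeld submodule. -/
def IsSimple (P : PreYD K H M) : Prop :=
  (∃ m : M, m ≠ 0) ∧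
  ∀ S : Submodule K M, P.IsSubYD S → S = ⊥ ∨ S = ⊤

/-- The braiding `c(v ⊗ w) = v₍₋₁₎ · w ⊗ v₍₀₎` of a Yetter–Drinfeld module. -/
def braiding (P : PreYD K H M) : M ⊗[K] M →ₗ[K] M ⊗[K] M :=
  (TensorProduct.map (TensorProduct.lift P.act) LinearMap.id) ∘ₗ
  (TensorProduct.assoc K H M M).symm.toLinearMap ∘ₗ
  (TensorProduct.map LinearMap.id (TensorProduct.comm K M M).toLinearMap) ∘ₗ
  (TensorProduct.assoc K H M M).toLinearMap ∘ₗ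
  (TensorProduct.map P.coact LinearMap.id)

end PreYD

end

noncomputable section

namespace KPAlg

variable {K : Type*} {H : Type*} [Field K] [Ring H] [HopfAlgebra K H]

/-- `f₀₀ = (1/4)(1+x)(1+y)`. -/
def f00 (P : KPAlg K H) : H := (4:K)⁻¹ • ((1 + P.x) * (1 + P.y))
/-- `f₁₀ = (1/4)(1-x)(1+y)`. -/
def f10 (P : KPAlg K H) : H := (4:K)⁻¹ • ((1 - P.x) * (1 + P.y))
/-- `f₀₁ = (1/4)(1+x)(1-y)`. -/
def f01 (P : KPAlg K H) : H := (4:K)⁻¹ • ((1 + P.x) * (1 - P.y))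
/-- `f₁₁ = (1/4)(1-x)(1-y)`. -/
def f11 (P : KPAlg K H) : H := (4:K)⁻¹ • ((1 - P.x) * (1 - P.y))

/-- `w = (f₀₀ + √i f₁₀ + (1/√i) f₀₁ + i f₁₁) z`. -/
def wEl (P : KPAlg K H) (i sqi : K) : H :=
  (P.f00 + sqi • P.f10 + sqi⁻¹ • P.f01 + i • P.f11) * P.z

section Chars

variable (P : KPAlg K H) (i : K)

/-- The one-dimensional Yetter–Drinfeld module data `M⟨b,g⟩`:
`x·v = b²v`, `y·v = b²v`, `z·v = bv`, `ρ(v) = g ⊗ v`. -/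
def IsM1 (b : K) (g : H) (Q : PreYD K H K) : Prop :=
  (∀ v : K, Q.act P.x v = b^2 * v) ∧
  (∀ v : K, Q.act P.y v = b^2 * v) ∧
  (∀ v : K, Q.act P.z v = b * v) ∧
  (∀ v : K, Q.coact v = g ⊗ₜ[K] v)

/-- Basis vector `(1,0)` of `K × K`. -/
def E1 : K × K := (1, 0)
/-- Basis vector `(0,1)` of `K × K`. -/
def E2 : K × K := (0, 1)

/-- The two-dimensional Yetter–Drinfeld module data `M⟨(1,xy)⟩`. -/
def IsM1xy (Q : PreYD K H (K × K)) : Prop :=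
  Q.coact E1 = (1 : H) ⊗ₜ[K] E1 ∧ Q.coact E2 = (P.x * P.y) ⊗ₜ[K] E2 ∧
  Q.act P.x E1 = -E1 ∧ Q.act P.x E2 = -E2 ∧
  Q.act P.y E1 = -E1 ∧ Q.act P.y E2 = -E2 ∧
  Q.act P.z E1 = i • E2 ∧ Q.act P.z E2 = i • E1

/-- The two-dimensional Yetter–Drinfeld module data `M⟨(x,y)⟩`. -/
def IsMxy (Q : PreYD K H (K × K)) : Prop :=
  Q.coact E1 = P.x ⊗ₜ[K] E1 ∧ Q.coact E2 = P.y ⊗ₜ[K] E2 ∧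
  Q.act P.x E1 = E1 ∧ Q.act P.x E2 = E2 ∧
  Q.act P.y E1 = E1 ∧ Q.act P.y E2 = E2 ∧
  Q.act P.z E1 = E2 ∧ Q.act P.z E2 = E1

/-- The two-dimensional Yetter–Drinfeld module data `M⟨(g₁,g₂)⟩`. -/
def IsMg (g₁ g₂ : H) (Q : PreYD K H (K × K)) : Prop :=
  Q.coact E1 = g₁ ⊗ₜ[K] E1 ∧ Q.coact E2 = g₂ ⊗ₜ[K] E2 ∧
  Q.act P.x E1 = E1 ∧ Q.act P.y E1 = -E1 ∧ Q.act P.z E1 = E2 ∧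
  Q.act P.x E2 = -E2 ∧ Q.act P.y E2 = E2 ∧ Q.act P.z E2 = E1

/-- The two-dimensional Yetter–Drinfeld module data `W^{b₁,b₂}` in the basis `w₁, w₂`. -/
def IsW (b₁ b₂ : K) (Q : PreYD K H (K × K)) : Prop :=
  Q.act P.x E1 = (i * b₁) • E2 ∧ Q.act P.x E2 = (-(i * b₁)) • E1 ∧
  Q.act P.y E1 = (i * b₁) • E2 ∧ Q.act P.y E2 = (-(i * b₁)) • E1 ∧
  Q.act P.z E1 = ((1 - i * b₁) * b₂ * (2:K)⁻¹) • (E1 - E2) ∧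
  Q.act P.z E2 = ((1 - i * b₁) * b₂ * (2:K)⁻¹) • (E1 + E2) ∧
  Q.coact E1 = ((2:K)⁻¹ • ((1 + P.y) * P.z)) ⊗ₜ[K] E1
      + ((2:K)⁻¹ • ((1 - P.y) * P.z)) ⊗ₜ[K] E2 ∧
  Q.coact E2 = ((2:K)⁻¹ • (P.x * (1 + P.y) * P.z)) ⊗ₜ[K] E2
      + ((2:K)⁻¹ • (P.x * (1 - P.y) * P.z)) ⊗ₜ[K] E1

/-- The two-dimensional Yetter–Drinfeld module data `W^{b₁,b₂}` in the basis `p₁, p₂`. -/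
def IsWp (b₁ b₂ : K) (Q : PreYD K H (K × K)) : Prop :=
  Q.act P.x E1 = E1 ∧ Q.act P.y E1 = E1 ∧ Q.act P.z E1 = b₂ • E1 ∧
  Q.act P.x E2 = -E2 ∧ Q.act P.y E2 = -E2 ∧ Q.act P.z E2 = (-(i * b₁ * b₂)) • E2 ∧
  Q.coact E1 = ((P.f00 - (i * b₁) • P.f11) * P.z) ⊗ₜ[K] E1
      + ((P.f10 + (i * b₁) • P.f01) * P.z) ⊗ₜ[K] E2 ∧
  Q.coact E2 = ((P.f00 + (i * b₁) • P.f11) * P.z) ⊗ₜ[K] E2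
      + ((P.f10 - (i * b₁) • P.f01) * P.z) ⊗ₜ[K] E1

/-- The two-dimensional Yetter–Drinfeld module data `W₁ᵃ`. -/
def IsW1a (sqi a : K) (Q : PreYD K H (K × K)) : Prop :=
  Q.act P.x E1 = -E1 ∧ Q.act P.y E1 = E1 ∧
  Q.act P.z E1 = ((2:K)⁻¹ * (1 - i) * (a + 1)) • E2 ∧
  Q.act P.x E2 = E2 ∧ Q.act P.y E2 = -E2 ∧
  Q.act P.z E2 = ((2:K)⁻¹ * (1 + i) * (a + 1)) • E1 ∧
  Q.coact E1 = ((2:K)⁻¹ • ((P.x + P.y) * P.wEl i sqi)) ⊗ₜ[K] E1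
      + (((2:K)⁻¹ * sqi) • ((P.x - P.y) * P.wEl i sqi)) ⊗ₜ[K] E2 ∧
  Q.coact E2 = ((2:K)⁻¹ • ((1 + P.x * P.y) * P.wEl i sqi)) ⊗ₜ[K] E2
      + (((2:K)⁻¹ * sqi) • ((1 - P.x * P.y) * P.wEl i sqi)) ⊗ₜ[K] E1

/-- The two-dimensional Yetter–Drinfeld module data `W₂ᵃ`. -/
def IsW2a (sqi a : K) (Q : PreYD K H (K × K)) : Prop :=
  Q.act P.x E1 = E1 ∧ Q.act P.y E1 = -E1 ∧
  Q.act P.z E1 = ((2:K)⁻¹ * (1 - i) * (a + 1)) • E2 ∧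
  Q.act P.x E2 = -E2 ∧ Q.act P.y E2 = E2 ∧
  Q.act P.z E2 = ((2:K)⁻¹ * (1 + i) * (a + 1)) • E1 ∧
  Q.coact E1 = ((2:K)⁻¹ • ((P.x + P.y) * P.wEl i sqi)) ⊗ₜ[K] E1
      + (((2:K)⁻¹ * sqi) • ((P.x - P.y) * P.wEl i sqi)) ⊗ₜ[K] E2 ∧
  Q.coact E2 = ((2:K)⁻¹ • ((1 + P.x * P.y) * P.wEl i sqi)) ⊗ₜ[K] E2
      + (((2:K)⁻¹ * sqi) • ((1 - P.x * P.y) * P.wEl i sqi)) ⊗ₜ[K] E1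

end Chars

end KPAlg

/-- `Q` is the direct sum of the Yetter–Drinfeld module data `Q₁` and `Q₂`,
with componentwise action and coaction. -/
def IsProdYD {K H : Type*} [Field K] [Ring H] [HopfAlgebra K H]
    {M₁ M₂ : Type*} [AddCommGroup M₁] [Module K M₁] [AddCommGroup M₂] [Module K M₂]
    (Q₁ : PreYD K H M₁) (Q₂ : PreYD K H M₂) (Q : PreYD K H (M₁ × M₂)) : Prop :=
  (∀ (h : H) (m₁ : M₁) (m₂ : M₂), Q.act h (m₁, m₂) = (Q₁.act h m₁, Q₂.act h m₂)) ∧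
  (∀ (m₁ : M₁) (m₂ : M₂), Q.coact (m₁, m₂) =
    (TensorProduct.map (LinearMap.id (R := K) (M := H)) (LinearMap.inl K M₁ M₂)) (Q₁.coact m₁) +
    (TensorProduct.map LinearMap.id (LinearMap.inr K M₁ M₂)) (Q₂.coact m₂))

end

noncomputable section

open TensorProduct

/-- The twist `V^ψ` of a Yetter–Drinfeld module by a Hopf algebra automorphism `ψ`:
the action is `h ·_ψ v = ψ(h)·v` and the coaction is `(ψ⁻¹ ⊗ id) ∘ ρ`. -/
def PreYD.twist {K H : Type*} [Field K] [Ring H] [HopfAlgebra K H]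
    {M : Type*} [AddCommGroup M] [Module K M]
    (Q : PreYD K H M) (τ : H ≃ₐ[K] H) : PreYD K H M where
  act := Q.act ∘ₗ τ.toLinearMap
  coact := (TensorProduct.map τ.symm.toLinearMap LinearMap.id) ∘ₗ Q.coact


namespace KPTau3Aux

open TensorProduct Coalgebra

variable {K H : Type*} [Field K] [Ring H] [HopfAlgebra K H]

section RingIds
variable (P : KPAlg K H)

lemma xx : P.x * P.x = 1 := by have := P.x_sq; rwa [sq] at this
lemma yy : P.y * P.y = 1 := by have := P.y_sq; rwa [sq] at this

lemma yx' : ∀ a : H, P.y * (P.x * a) = P.x * (P.y * a) := fun a => by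
  rw [← mul_assoc, ← P.xy_comm, mul_assoc]
lemma xx' : ∀ a : H, P.x * (P.x * a) = a := fun a => by rw [← mul_assoc, xx, one_mul]
lemma yy' : ∀ a : H, P.y * (P.y * a) = a := fun a => by rw [← mul_assoc, yy, one_mul]

lemma u_sq : (1 + P.x + P.y - P.x*P.y) * (1 + P.x + P.y - P.x*P.y) = 4 := by
  simp only [mul_add, add_mul, mul_sub, sub_mul, mul_one, one_mul, mul_assoc, xx, yy,
    P.xy_comm.symm, yx', xx', yy']
  abel_nf
  norm_num

lemma g00_u : ((1+P.x)*(1+P.y)) * (1 + P.x + P.y - P.x*P.y) = 2*((1+P.x)*(1+P.y)) := by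
  simp only [mul_add, add_mul, mul_sub, sub_mul, mul_one, one_mul, mul_assoc, xx, yy,
    P.xy_comm.symm, yx', xx', yy', two_mul]
  abel_nf
  simp [two_smul, one_add_one_eq_two]
  abel

lemma g11_u : ((1-P.x)*(1-P.y)) * (1 + P.x + P.y - P.x*P.y) = -(2*((1-P.x)*(1-P.y))) := by
  simp only [mul_add, add_mul, mul_sub, sub_mul, mul_one, one_mul, mul_assoc, xx, yy,
    P.xy_comm.symm, yx', xx', yy', two_mul, neg_add, neg_sub, neg_neg]
  abel_nf
  simp [two_smul, one_add_one_eq_two]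
  abel

lemma g10_u : ((1-P.x)*(1+P.y)) * (1 + P.x + P.y - P.x*P.y) = 2*((1-P.x)*(1+P.y)) := by
  simp only [mul_add, add_mul, mul_sub, sub_mul, mul_one, one_mul, mul_assoc, xx, yy,
    P.xy_comm.symm, yx', xx', yy', two_mul]
  abel_nf
  simp [two_smul, one_add_one_eq_two]
  abel

lemma g01_u : ((1+P.x)*(1-P.y)) * (1 + P.x + P.y - P.x*P.y) = 2*((1+P.x)*(1-P.y)) := by
  simp only [mul_add, add_mul, mul_sub, sub_mul, mul_one, one_mul, mul_assoc, xx, yy,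
    P.xy_comm.symm, yx', xx', yy', two_mul]
  abel_nf
  simp [two_smul, one_add_one_eq_two]
  abel

lemma c00 : (1+P.y)*(1+P.x) = (1+P.x)*(1+P.y) := by
  simp only [mul_add, add_mul, mul_one, one_mul, P.xy_comm]; abel
lemma c11 : (1-P.y)*(1-P.x) = (1-P.x)*(1-P.y) := by
  simp only [mul_sub, sub_mul, mul_one, one_mul, P.xy_comm]; abel
lemma c10 : (1-P.y)*(1+P.x) = (1+P.x)*(1-P.y) := by
  simp only [mul_add, add_mul, mul_sub, sub_mul, mul_one, one_mul, P.xy_comm]; abel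
lemma c01 : (1+P.y)*(1-P.x) = (1-P.x)*(1+P.y) := by
  simp only [mul_add, add_mul, mul_sub, sub_mul, mul_one, one_mul, P.xy_comm]; abel

lemma u_comm : 1 + P.y + P.x - P.y*P.x = 1 + P.x + P.y - P.x*P.y := by
  rw [← P.xy_comm]; abel

lemma u_mul_z : (1 + P.x + P.y - P.x*P.y) * P.z = P.z + P.x*P.z + P.y*P.z - P.x*P.y*P.z := by
  rw [sub_mul, add_mul, add_mul, one_mul]
end RingIds

/-- extensionality on the spanning set -/
lemma act_ext (P : KPAlg K H) {M N : Type*} [AddCommGroup M] [Module K M]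
    [AddCommGroup N] [Module K N]
    (A : H →ₗ[K] M →ₗ[K] M) (B : H →ₗ[K] N →ₗ[K] N)
    (hA1 : ∀ m, A 1 m = m) (hAmul : ∀ g h m, A (g*h) m = A g (A h m))
    (hB1 : ∀ n, B 1 n = n) (hBmul : ∀ g h n, B (g*h) n = B g (B h n))
    (f : M →ₗ[K] N)
    (hx : ∀ m, f (A P.x m) = B P.x (f m))
    (hy : ∀ m, f (A P.y m) = B P.y (f m))
    (hz : ∀ m, f (A P.z m) = B P.z (f m)) :
    ∀ h m, f (A h m) = B h (f m) := by
  intro h m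
  have hh : h ∈ Submodule.span K
      (Set.range ![(1:H),P.x,P.y,P.x*P.y,P.z,P.x*P.z,P.y*P.z,P.x*P.y*P.z]) := by
    rw [P.basis_span]; trivial
  induction hh using Submodule.span_induction generalizing m with
  | mem g hg =>
    simp only [Matrix.range_cons, Matrix.range_empty, Set.union_empty, Set.mem_insert_iff,
      Set.mem_union, Set.mem_singleton_iff, Set.mem_range] at hg
    rcases hg with rfl|rfl|rfl|rfl|rfl|rfl|rfl|rfl <;>
      simp only [hA1, hB1, hAmul, hBmul, hx, hy, hz]
  | zero => simp
  | add g₁ g₂ _ _ ih1 ih2 => simp [ih1, ih2]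
  | smul c g _ ih => simp [ih]

/-- extensionality on E1, E2 for linear maps on K × K -/
lemma ext_E {V : Type*} [AddCommGroup V] [Module K V] (φ ψ : (K × K) →ₗ[K] V)
    (h1 : φ (KPAlg.E1) = ψ (KPAlg.E1)) (h2 : φ (KPAlg.E2) = ψ (KPAlg.E2)) :
    ∀ m, φ m = ψ m := by
  intro m
  have hm : m = m.1 • (KPAlg.E1 : K × K) + m.2 • KPAlg.E2 := by
    simp [KPAlg.E1, KPAlg.E2, Prod.ext_iff]
  rw [hm, map_add, map_add, map_smul, map_smul, map_smul, map_smul, h1, h2]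

end KPTau3Aux
/-- **Statement 16.** For the Hopf algebra automorphism `τ₃` of `H₈` with
`τ₃(x) = y`, `τ₃(y) = x`, `τ₃(z) = (1/2)(z + xz + yz - xyz)` one has, as
Yetter–Drinfeld modules over `H₈`: `(M⟨bi,x⟩)^{τ₃} ≅ M⟨-bi,y⟩` for `b = ±1`,
`(M⟨(xy,x)⟩)^{τ₃} ≅ M⟨(y,xy)⟩`, and `(W^{b₁,-1})^{τ₃} ≅ W^{-b₁,-1}` for `b₁ = ±1`. -/
theorem twists_by_tau3_of_yd_modules_over_H8
    {K H : Type*} [Field K] [CharZero K] [IsAlgClosed K]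
    [Ring H] [HopfAlgebra K H] (P : KPAlg K H) (i : K) (hi : i ^ 2 = -1)
    (τ : H ≃ₐ[K] H)
    (hτcoalg : ∀ h : H, Coalgebra.comul (R := K) (τ h) =
      (TensorProduct.map τ.toLinearMap τ.toLinearMap) (Coalgebra.comul (R := K) h))
    (hτx : τ P.x = P.y) (hτy : τ P.y = P.x)
    (hτz : τ P.z = (2:K)⁻¹ • (P.z + P.x * P.z + P.y * P.z - P.x * P.y * P.z)) :
    (∀ b ∈ ({1, -1} : Set K),
      ∀ (Q Q' : PreYD K H K), Q.IsYD → P.IsM1 (b * i) P.x Q →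
        Q'.IsYD → P.IsM1 (-(b * i)) P.y Q' → PreYD.Equiv (Q.twist τ) Q') ∧
    (∀ (Q Q' : PreYD K H (K × K)), Q.IsYD → P.IsMg (P.x * P.y) P.x Q →
        Q'.IsYD → P.IsMg P.y (P.x * P.y) Q' → PreYD.Equiv (Q.twist τ) Q') ∧
    (∀ b₁ ∈ ({1, -1} : Set K),
      ∀ (Q Q' : PreYD K H (K × K)), Q.IsYD → P.IsWp i b₁ (-1) Q →
        Q'.IsYD → P.IsWp i (-b₁) (-1) Q' → PreYD.Equiv (Q.twist τ) Q') := by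

  classical
  have hsx : τ.symm P.x = P.y := by rw [← hτy, AlgEquiv.symm_apply_apply]
  have hsy : τ.symm P.y = P.x := by rw [← hτx, AlgEquiv.symm_apply_apply]
  have h2H : ∀ w : H, (2:H) * w = (2:K) • w := fun w => by
    rw [Algebra.smul_def, map_ofNat]
  have hsz : τ.symm P.z = (2:K)⁻¹ • ((1 + P.x + P.y - P.x*P.y) * P.z) := by
    have hτu : τ (1 + P.x + P.y - P.x*P.y) = 1 + P.x + P.y - P.x*P.y := by
      rw [map_sub, map_add, map_add, map_one, map_mul, hτx, hτy, KPTau3Aux.u_comm]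
    have h4 : (4:H) * P.z = (4:K) • P.z := by
      rw [Algebra.smul_def, map_ofNat]
    have hmain : τ ((2:K)⁻¹ • ((1 + P.x + P.y - P.x*P.y) * P.z)) = P.z := by
      rw [map_smul, map_mul, hτu, hτz, ← KPTau3Aux.u_mul_z, mul_smul_comm, ← mul_assoc,
        KPTau3Aux.u_sq, h4, smul_smul, smul_smul]
      norm_num
    have h' := congrArg τ.symm hmain
    rw [AlgEquiv.symm_apply_apply] at h'
    exact h'.symm
  have key : ∀ g g' : H, g * (1 + P.x + P.y - P.x*P.y) = 2 * g' →
      g * τ.symm P.z = g' * P.z := by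
    intro g g' hgg
    rw [hsz, mul_smul_comm, ← mul_assoc, hgg, mul_assoc, h2H, smul_smul]
    norm_num
  have h00 : P.f00 * τ.symm P.z = P.f00 * P.z := key _ _ (by
    rw [KPAlg.f00, smul_mul_assoc, KPTau3Aux.g00_u P, mul_smul_comm])
  have h10 : P.f10 * τ.symm P.z = P.f10 * P.z := key _ _ (by
    rw [KPAlg.f10, smul_mul_assoc, KPTau3Aux.g10_u P, mul_smul_comm])
  have h01 : P.f01 * τ.symm P.z = P.f01 * P.z := key _ _ (by
    rw [KPAlg.f01, smul_mul_assoc, KPTau3Aux.g01_u P, mul_smul_comm])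
  have h11 : P.f11 * τ.symm P.z = -(P.f11 * P.z) := by
    have hstep : P.f11 * (1 + P.x + P.y - P.x*P.y) = 2 * (-P.f11) := by
      rw [KPAlg.f11, smul_mul_assoc, KPTau3Aux.g11_u P, mul_neg, mul_smul_comm, ← smul_neg]
    have := key P.f11 (-P.f11) hstep
    rwa [neg_mul] at this
  have hsf00 : τ.symm P.f00 = P.f00 := by
    rw [KPAlg.f00, map_smul, map_mul, map_add, map_add, map_one, hsx, hsy,
      KPTau3Aux.c00]
  have hsf11 : τ.symm P.f11 = P.f11 := by
    rw [KPAlg.f11, map_smul, map_mul, map_sub, map_sub, map_one, hsx, hsy,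
      KPTau3Aux.c11]
  have hsf10 : τ.symm P.f10 = P.f01 := by
    rw [KPAlg.f10, KPAlg.f01, map_smul, map_mul, map_sub, map_add, map_one, hsx, hsy,
      KPTau3Aux.c10]
  have hsf01 : τ.symm P.f01 = P.f10 := by
    rw [KPAlg.f01, KPAlg.f10, map_smul, map_mul, map_add, map_sub, map_one, hsx, hsy,
      KPTau3Aux.c01]
  have hS00 : τ.symm (P.f00 * P.z) = P.f00 * P.z := by rw [map_mul, hsf00, h00]
  have hS11 : τ.symm (P.f11 * P.z) = -(P.f11 * P.z) := by rw [map_mul, hsf11, h11]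
  have hS10 : τ.symm (P.f10 * P.z) = P.f01 * P.z := by rw [map_mul, hsf10, h01]
  have hS01 : τ.symm (P.f01 * P.z) = P.f10 * P.z := by rw [map_mul, hsf01, h10]
  refine ⟨?_, ?_, ?_⟩
  · -- Part 1
    intro b hb Q Q' hQ hQM hQ' hQ'M
    obtain ⟨hQ1, hQmul, -, -, -⟩ := hQ
    obtain ⟨hQx, hQy, hQz, hQco⟩ := hQM
    obtain ⟨hQ'x, hQ'y, hQ'z, hQ'co⟩ := hQ'M
    have hb2 : b * b = 1 := by
      rcases hb with rfl | rfl <;> norm_num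
    have hc2 : (b*i)^2 = -1 := by
      rw [mul_pow, hi, sq, hb2]; ring
    simp only [hc2] at hQx hQy
    simp only [neg_sq, hc2] at hQ'x hQ'y
    refine ⟨LinearEquiv.refl K K, ?_, ?_⟩
    · refine KPTau3Aux.act_ext P (Q.twist τ).act Q'.act ?_ ?_ hQ'.1 hQ'.2.1
        (LinearEquiv.refl K K).toLinearMap ?_ ?_ ?_
      · intro m
        simp [PreYD.twist, hQ1]
      · intro g h m
        simp [PreYD.twist, map_mul, hQmul]
      · intro m
        simp [PreYD.twist, hτx, hQy, hQ'x]
      · intro m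
        simp [PreYD.twist, hτy, hQx, hQ'y]
      · intro m
        show (Q.act (τ P.z)) m = Q'.act P.z m
        simp only [PreYD.twist, LinearMap.coe_comp, Function.comp_apply,
          AlgEquiv.toLinearMap_apply, hτz, map_smul, map_add, map_sub,
          LinearMap.smul_apply, LinearMap.add_apply, LinearMap.sub_apply,
          hQmul, hQx, hQy, hQz, hQ'z, LinearEquiv.coe_coe, LinearEquiv.refl_apply,
          smul_eq_mul]
        ring
    · intro m
      simp [PreYD.twist, hQco, hQ'co, hsx]
  · -- Part 2
    intro Q Q' hQ hQM hQ' hQ'M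
    obtain ⟨hQ1, hQmul, -, -, -⟩ := hQ
    obtain ⟨hco1, hco2, hxE1, hyE1, hzE1, hxE2, hyE2, hzE2⟩ := hQM
    obtain ⟨hco1', hco2', hxE1', hyE1', hzE1', hxE2', hyE2', hzE2'⟩ := hQ'M
    set f := (LinearEquiv.prodComm K K K) with hf
    have fE1 : f (KPAlg.E1 : K × K) = KPAlg.E2 := by
      simp [hf, KPAlg.E1, KPAlg.E2]
    have fE2 : f (KPAlg.E2 : K × K) = KPAlg.E1 := by
      simp [hf, KPAlg.E1, KPAlg.E2]
    refine ⟨f, ?_, ?_⟩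
    · refine KPTau3Aux.act_ext P ((Q.twist τ).act) Q'.act ?_ ?_ hQ'.1 hQ'.2.1
        f.toLinearMap ?_ ?_ ?_
      · intro m; simp [PreYD.twist, hQ1]
      · intro g h m; simp [PreYD.twist, map_mul, hQmul]
      · intro m
        refine KPTau3Aux.ext_E
          (f.toLinearMap ∘ₗ ((Q.twist τ).act P.x)) ((Q'.act P.x) ∘ₗ f.toLinearMap) ?_ ?_ m
        · simp only [LinearMap.comp_apply, PreYD.twist, LinearMap.coe_comp,
            Function.comp_apply, AlgEquiv.toLinearMap_apply, LinearEquiv.coe_coe, hτx,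
            hyE1, map_neg, fE1, hxE2']
        · simp only [LinearMap.comp_apply, PreYD.twist, LinearMap.coe_comp,
            Function.comp_apply, AlgEquiv.toLinearMap_apply, LinearEquiv.coe_coe, hτx,
            hyE2, fE2, hxE1']
      · intro m
        refine KPTau3Aux.ext_E
          (f.toLinearMap ∘ₗ ((Q.twist τ).act P.y)) ((Q'.act P.y) ∘ₗ f.toLinearMap) ?_ ?_ m
        · simp only [LinearMap.comp_apply, PreYD.twist, LinearMap.coe_comp,
            Function.comp_apply, AlgEquiv.toLinearMap_apply, LinearEquiv.coe_coe, hτy,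
            hxE1, fE1, hyE2']
        · simp only [LinearMap.comp_apply, PreYD.twist, LinearMap.coe_comp,
            Function.comp_apply, AlgEquiv.toLinearMap_apply, LinearEquiv.coe_coe, hτy,
            hxE2, map_neg, fE2, hyE1']
      · intro m
        refine KPTau3Aux.ext_E
          (f.toLinearMap ∘ₗ ((Q.twist τ).act P.z)) ((Q'.act P.z) ∘ₗ f.toLinearMap) ?_ ?_ m
        · simp only [LinearMap.comp_apply, PreYD.twist, LinearMap.coe_comp,
            Function.comp_apply, AlgEquiv.toLinearMap_apply, LinearEquiv.coe_coe, hτz,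
            map_smul, map_add, map_sub, LinearMap.smul_apply, LinearMap.add_apply,
            LinearMap.sub_apply, hQmul, hzE1, hxE2, hyE2, map_neg, fE1, fE2, hzE2']
          module
        · simp only [LinearMap.comp_apply, PreYD.twist, LinearMap.coe_comp,
            Function.comp_apply, AlgEquiv.toLinearMap_apply, LinearEquiv.coe_coe, hτz,
            map_smul, map_add, map_sub, LinearMap.smul_apply, LinearMap.add_apply,
            LinearMap.sub_apply, hQmul, hzE2, hxE1, hyE1, map_neg, fE1, fE2, hzE1']
          module
    · intro m
      refine KPTau3Aux.ext_E
        (Q'.coact ∘ₗ f.toLinearMap)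
        ((TensorProduct.map LinearMap.id (f : (K × K) →ₗ[K] (K × K))) ∘ₗ (Q.twist τ).coact)
        ?_ ?_ m
      · simp only [LinearMap.comp_apply, PreYD.twist, LinearMap.coe_comp,
          Function.comp_apply, LinearEquiv.coe_coe, fE1, hco2', hco1,
          TensorProduct.map_tmul, LinearMap.id_coe, id_eq, AlgEquiv.toLinearMap_apply,
          map_mul, hsx, hsy]
        rw [P.xy_comm]
      · simp only [LinearMap.comp_apply, PreYD.twist, LinearMap.coe_comp,
          Function.comp_apply, LinearEquiv.coe_coe, fE2, hco1', hco2,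
          TensorProduct.map_tmul, LinearMap.id_coe, id_eq, AlgEquiv.toLinearMap_apply,
          map_mul, hsx, hsy]
  · -- Part 3
    intro b₁ hb₁ Q Q' hQ hQM hQ' hQ'M
    obtain ⟨hQ1, hQmul, -, -, -⟩ := hQ
    obtain ⟨hx1, hy1, hz1, hx2, hy2, hz2, hco1, hco2⟩ := hQM
    obtain ⟨hx1', hy1', hz1', hx2', hy2', hz2', hco1', hco2'⟩ := hQ'M
    have hb2 : b₁ * b₁ = 1 := by rcases hb₁ with rfl | rfl <;> norm_num
    have hine : i ≠ 0 := by intro h; rw [h] at hi; norm_num at hi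
    have hb0 : b₁ ≠ 0 := by rcases hb₁ with rfl | rfl <;> norm_num
    have ha : -(i*b₁) ≠ 0 := by simp [hine, hb0]
    set f := (LinearEquiv.refl K K).prodCongr (LinearEquiv.smulOfNeZero K K (-(i*b₁)) ha)
      with hfdef
    have fE1 : f (KPAlg.E1 : K × K) = KPAlg.E1 := by
      simp [hfdef, KPAlg.E1, LinearEquiv.prodCongr_apply]
    have fE2 : f (KPAlg.E2 : K × K) = (-(i*b₁)) • (KPAlg.E2 : K × K) := by
      simp [hfdef, KPAlg.E2, LinearEquiv.prodCongr_apply]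
    refine ⟨f, ?_, ?_⟩
    · refine KPTau3Aux.act_ext P ((Q.twist τ).act) Q'.act ?_ ?_ hQ'.1 hQ'.2.1
        f.toLinearMap ?_ ?_ ?_
      · intro m; simp [PreYD.twist, hQ1]
      · intro g h m; simp [PreYD.twist, map_mul, hQmul]
      · intro m
        refine KPTau3Aux.ext_E (f.toLinearMap ∘ₗ ((Q.twist τ).act P.x))
          ((Q'.act P.x) ∘ₗ f.toLinearMap) ?_ ?_ m
        · simp only [LinearMap.comp_apply, PreYD.twist, LinearMap.coe_comp,
            Function.comp_apply, AlgEquiv.toLinearMap_apply, LinearEquiv.coe_coe, hτx,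
            hy1, fE1, hx1']
        · simp only [LinearMap.comp_apply, PreYD.twist, LinearMap.coe_comp,
            Function.comp_apply, AlgEquiv.toLinearMap_apply, LinearEquiv.coe_coe, hτx,
            hy2, map_neg, map_smul, fE2, hx2']
          module
      · intro m
        refine KPTau3Aux.ext_E (f.toLinearMap ∘ₗ ((Q.twist τ).act P.y))
          ((Q'.act P.y) ∘ₗ f.toLinearMap) ?_ ?_ m
        · simp only [LinearMap.comp_apply, PreYD.twist, LinearMap.coe_comp,
            Function.comp_apply, AlgEquiv.toLinearMap_apply, LinearEquiv.coe_coe, hτy,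
            hx1, fE1, hy1']
        · simp only [LinearMap.comp_apply, PreYD.twist, LinearMap.coe_comp,
            Function.comp_apply, AlgEquiv.toLinearMap_apply, LinearEquiv.coe_coe, hτy,
            hx2, map_neg, map_smul, fE2, hy2']
          module
      · intro m
        refine KPTau3Aux.ext_E (f.toLinearMap ∘ₗ ((Q.twist τ).act P.z))
          ((Q'.act P.z) ∘ₗ f.toLinearMap) ?_ ?_ m
        · simp only [LinearMap.comp_apply, PreYD.twist, LinearMap.coe_comp,
            Function.comp_apply, AlgEquiv.toLinearMap_apply, LinearEquiv.coe_coe, hτz,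
            map_smul, map_add, map_sub, LinearMap.smul_apply, LinearMap.add_apply,
            LinearMap.sub_apply, hQmul, hz1, hx1, hy1, fE1, hz1']
          match_scalars <;> ring1
        · simp only [LinearMap.comp_apply, PreYD.twist, LinearMap.coe_comp,
            Function.comp_apply, AlgEquiv.toLinearMap_apply, LinearEquiv.coe_coe, hτz,
            map_smul, map_add, map_sub, LinearMap.smul_apply, LinearMap.add_apply,
            LinearMap.sub_apply, hQmul, hz2, hx2, hy2, map_neg, fE2, hz2']
          match_scalars <;> ring1
    · intro m
      refine KPTau3Aux.ext_E (Q'.coact ∘ₗ f.toLinearMap)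
        ((TensorProduct.map LinearMap.id (f : (K × K) →ₗ[K] (K × K))) ∘ₗ
          (Q.twist τ).coact) ?_ ?_ m
      · simp only [LinearMap.comp_apply, PreYD.twist, LinearMap.coe_comp,
          Function.comp_apply, LinearEquiv.coe_coe, fE1, hco1', hco1, sub_mul, add_mul,
          smul_mul_assoc, map_add, map_sub, map_smul, TensorProduct.map_tmul,
          AlgEquiv.toLinearMap_apply, hS00, hS11, hS10, hS01, LinearMap.id_coe, id_eq,
          fE2, TensorProduct.add_tmul, TensorProduct.sub_tmul, smul_neg, neg_neg, map_neg,
          TensorProduct.neg_tmul, TensorProduct.tmul_smul, sub_neg_eq_add]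
        simp only [← TensorProduct.smul_tmul']
        match_scalars <;>
          first
            | ring1
            | linear_combination (b₁*b₁) * hi - hb2
            | linear_combination -((b₁*b₁) * hi) + hb2
            | linear_combination (b₁*b₁) * hi + hb2
            | linear_combination -((b₁*b₁) * hi) - hb2
      · simp only [LinearMap.comp_apply, PreYD.twist, LinearMap.coe_comp,
          Function.comp_apply, LinearEquiv.coe_coe, fE2, map_smul, hco2', hco2, sub_mul,
          add_mul, smul_mul_assoc, map_add, map_sub, TensorProduct.map_tmul,
          AlgEquiv.toLinearMap_apply, hS00, hS11, hS10, hS01, LinearMap.id_coe, id_eq,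
          fE1, TensorProduct.add_tmul, TensorProduct.sub_tmul, smul_neg, neg_neg, map_neg,
          TensorProduct.neg_tmul, TensorProduct.tmul_smul, sub_neg_eq_add]
        simp only [← TensorProduct.smul_tmul']
        match_scalars <;>
          first
            | ring1
            | linear_combination (b₁*b₁) * hi - hb2
            | linear_combination -((b₁*b₁) * hi) + hb2
            | linear_combination (b₁*b₁) * hi + hb2
            | linear_combination -((b₁*b₁) * hi) - hb2

end
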